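/- The expected number of rounds of parallel list contraction (contracting all local minima each round, under a uniformly random assignment of distinct priorities) is O(log n): with probability at least 1 − n^{−c}, the number of rounds is at most C·c·log n for suitable constant C. -/

import Mathlib

open scoped Classical

/-- Whether position `j` of the list `l` of priorities is a local minimum
(ends only compare with their single neighbor; sentinels have priority `+∞`). -/
noncomputable def lminB (l : List ℝ) (j : ℕ) : Bool :=
  (decide (j = 0) || decide (l.getD j 0 < l.getD (j - 1) 0)) &&
  (decide (j = l.length - 1) || decide (l.getD j 0 < l.getD (j + 1) 0))

/-- One round of parallel list contraction: simultaneously splice out all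
elements whose priority is a local minimum relative to its current neighbors. -/
noncomputable def contractStep (l : List ℝ) : List ℝ :=
  ((List.range l.length).filter (fun j => !(lminB l j))).map (fun j => l.getD j 0)

/-- The number of rounds until the list is fully contracted. -/
noncomputable def contractRounds (l : List ℝ) : ℕ :=
  sInf {t : ℕ | contractStep^[t] l = []}


noncomputable def surv (l : List ℝ) : List ℕ :=
  (List.range l.length).filter (fun j => !(lminB l j))

/-- `a` dominates `b` : `a`'s value is the strict max on the interval between them. -/
def dom (l : List ℝ) (a b : ℕ) : Prop :=
  a < l.length ∧ b < l.length ∧ a ≠ b ∧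
  ∀ m, min a b ≤ m → m ≤ max a b → m ≠ a → l.getD m 0 < l.getD a 0

lemma dom_trans {l : List ℝ} {a b c : ℕ} (h1 : dom l a b) (h2 : dom l b c) : dom l a c := by
  obtain ⟨ha, hb, hab, H1⟩ := h1
  obtain ⟨_, hc, hbc, H2⟩ := h2
  have hba : l.getD b 0 < l.getD a 0 := H1 b (by omega) (by omega) (Ne.symm hab)
  refine ⟨ha, hc, ?_, ?_⟩
  · rintro rfl
    exact absurd (H2 a (by omega) (by omega) hab) (not_lt.mpr hba.le)
  · intro m hm1 hm2 hma
    by_cases hcase : min a b ≤ m ∧ m ≤ max a b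
    · exact H1 m hcase.1 hcase.2 hma
    · have hmbc : min b c ≤ m ∧ m ≤ max b c := by omega
      by_cases hmb : m = b
      · subst hmb; exact hba
      · exact lt_trans (H2 m hmbc.1 hmbc.2 hmb) hba

lemma dom_lt_val {l : List ℝ} {a b : ℕ} (h : dom l a b) : l.getD b 0 < l.getD a 0 :=
  h.2.2.2 b (by omega) (by omega) (Ne.symm h.2.2.1)

lemma dom_ne {l : List ℝ} {a b : ℕ} (h : dom l a b) : a ≠ b := h.2.2.1

instance dom_is_trans (l : List ℝ) : IsTrans ℕ (dom l) := ⟨fun _ _ _ => dom_trans⟩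

lemma mem_surv {l : List ℝ} {j : ℕ} : j ∈ surv l ↔ j < l.length ∧ lminB l j = false := by
  simp [surv, List.mem_filter]

lemma surv_pairwise (l : List ℝ) : (surv l).Pairwise (· < ·) :=
  List.pairwise_lt_range.filter _

lemma surv_nodup (l : List ℝ) : (surv l).Nodup :=
  (surv_pairwise l).imp fun h => Nat.ne_of_lt h

lemma contractStep_eq (l : List ℝ) :
    contractStep l = (surv l).map (fun j => l.getD j 0) := rfl

lemma length_contractStep (l : List ℝ) : (contractStep l).length = (surv l).length := by
  rw [contractStep_eq, List.length_map]

-- section 2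

lemma surv_lt_length {l : List ℝ} {p : ℕ} (hp : p < (surv l).length) :
    (surv l)[p] < l.length := (mem_surv.mp (List.getElem_mem hp)).1

lemma surv_strictMono {l : List ℝ} {p q : ℕ} (hp : p < (surv l).length)
    (hq : q < (surv l).length) (hpq : p < q) : (surv l)[p] < (surv l)[q] :=
  List.pairwise_iff_get.mp (surv_pairwise l) ⟨p, hp⟩ ⟨q, hq⟩ hpq

lemma surv_le_mono {l : List ℝ} {p q : ℕ} (hp : p < (surv l).length)
    (hq : q < (surv l).length) (hpq : p ≤ q) : (surv l)[p] ≤ (surv l)[q] := by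
  rcases eq_or_lt_of_le hpq with rfl | h
  · exact le_refl _
  · exact le_of_lt (surv_strictMono hp hq h)

lemma surv_reflect {l : List ℝ} {p q : ℕ} (hp : p < (surv l).length)
    (hq : q < (surv l).length) (h : (surv l)[p] ≤ (surv l)[q]) : p ≤ q := by
  by_contra hc
  exact absurd (surv_strictMono hq hp (by omega)) (by omega)

lemma getD_contractStep {l : List ℝ} {p : ℕ} (hp : p < (surv l).length) :
    (contractStep l).getD p 0 = l.getD ((surv l)[p]) 0 := by
  rw [List.getD_eq_getElem _ 0 (by rw [length_contractStep]; exact hp)]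
  simp [contractStep_eq]

/-- a surviving (non-local-min) element dominates one of its neighbors -/
lemma surv_dom {l : List ℝ} (hnd : l.Nodup) {j : ℕ} (hj : j < l.length)
    (hm : lminB l j = false) : ∃ b, dom l j b := by
  have hvne : ∀ m, m < l.length → m ≠ j → l.getD m 0 ≠ l.getD j 0 := by
    intro m hmlen hmj
    rw [List.getD_eq_getElem _ 0 hmlen, List.getD_eq_getElem _ 0 hj]
    intro he; exact hmj (List.Nodup.getElem_inj_iff hnd |>.mp he)
  have := hm
  simp only [lminB, Bool.and_eq_false_iff, Bool.or_eq_false_iff, decide_eq_false_iff_not] at this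
  rcases this with ⟨h0, hlt⟩ | ⟨h0, hlt⟩
  · -- left neighbor is smaller
    have hj1 : j - 1 < l.length := by omega
    have : l.getD (j-1) 0 < l.getD j 0 :=
      lt_of_le_of_ne (not_lt.mp hlt) (hvne _ hj1 (by omega))
    exact ⟨j - 1, hj, hj1, by omega, fun m h1 h2 h3 => by
      have : m = j - 1 := by omega
      subst this
      exact lt_of_le_of_ne (not_lt.mp hlt) (hvne _ hj1 (by omega))⟩
  · -- right neighbor is smaller
    have hj1 : j + 1 < l.length := by omega
    exact ⟨j + 1, hj, hj1, by omega, fun m h1 h2 h3 => by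
      have : m = j + 1 := by omega
      subst this
      exact lt_of_le_of_ne (not_lt.mp hlt) (hvne _ hj1 (by omega))⟩

-- transfer lemma

lemma dom_transfer {l : List ℝ} {p q : ℕ} (h : dom (contractStep l) p q) :
    dom l ((surv l).getD p 0) ((surv l).getD q 0) := by
  obtain ⟨hp0, hq0, hpq, hdom⟩ := h
  rw [length_contractStep] at hp0 hq0
  rw [List.getD_eq_getElem _ 0 hp0, List.getD_eq_getElem _ 0 hq0]
  set s := surv l with hs
  set A := s[p] with hA
  set B := s[q] with hB
  have hAn : A < l.length := surv_lt_length hp0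
  have hBn : B < l.length := surv_lt_length hq0
  have hAB : A ≠ B := by
    rcases Nat.lt_or_ge p q with h' | h'
    · exact Nat.ne_of_lt (surv_strictMono hp0 hq0 h')
    · exact (Nat.ne_of_lt (surv_strictMono hq0 hp0 (by omega))).symm
  refine ⟨hAn, hBn, hAB, ?_⟩
  -- the key claim, by taking the max over the interval minus A
  set K : Finset ℕ := (Finset.Icc (min A B) (max A B)).erase A with hK
  have hBK : B ∈ K := by
    rw [hK]
    refine Finset.mem_erase.mpr ⟨Ne.symm hAB, ?_⟩
    rw [Finset.mem_Icc]
    omega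
  obtain ⟨m₀, hm₀K, hmax⟩ := Finset.exists_max_image K (fun m => l.getD m 0) ⟨B, hBK⟩
  have hm₀A : m₀ ≠ A := (Finset.mem_erase.mp hm₀K).1
  have hm₀I : min A B ≤ m₀ ∧ m₀ ≤ max A B := by
    have := (Finset.mem_erase.mp hm₀K).2
    simpa [Finset.mem_Icc] using this
  have key : l.getD m₀ 0 < l.getD A 0 := by
    by_cases hsm : m₀ ∈ s
    · obtain ⟨p', hp', he⟩ := List.mem_iff_getElem.mp hsm
      have hne' : p' ≠ p := by
        intro hcontra
        subst hcontra
        exact hm₀A he.symm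
      have hbetween : min p q ≤ p' ∧ p' ≤ max p q := by
        rcases Nat.lt_or_ge p q with h' | h'
        · have hABlt : A < B := surv_strictMono hp0 hq0 h'
          have h1 : A ≤ s[p'] := by rw [he]; omega
          have h2 : s[p'] ≤ B := by rw [he]; omega
          exact ⟨by rw [min_eq_left h'.le]; exact surv_reflect hp0 hp' h1,
                 by rw [max_eq_right h'.le]; exact surv_reflect hp' hq0 h2⟩
        · have hBA : B ≤ A := by
            rcases Nat.eq_or_lt_of_le h' with rfl | h''
            · omega
            · exact (surv_strictMono hq0 hp0 h'').le
          have h1 : B ≤ s[p'] := by rw [he]; omega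
          have h2 : s[p'] ≤ A := by rw [he]; omega
          exact ⟨by rw [min_eq_right h']; exact surv_reflect hq0 hp' h1,
                 by rw [max_eq_left h']; exact surv_reflect hp' hp0 h2⟩
      have := hdom p' (by omega) (by omega) hne'
      rwa [getD_contractStep hp', getD_contractStep hp0, he] at this
    · -- m₀ is a local min; its neighbors are bigger, contradiction with maximality
      exfalso
      have hm₀n : m₀ < l.length := by
        have : max A B < l.length := by omega
        omega
      have hlm : lminB l m₀ = true := by
        by_contra hc
        exact hsm (mem_surv.mpr ⟨hm₀n, by simpa using hc⟩)
      have hm₀B : m₀ ≠ B := by intro hcontra; apply hsm; rw [hcontra]; exact List.getElem_mem hq0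
      have hstrict : min A B < m₀ ∧ m₀ < max A B := by omega
      simp only [lminB, Bool.and_eq_true, Bool.or_eq_true, decide_eq_true_eq] at hlm
      have h0 : m₀ ≠ 0 := by omega
      have hn1 : m₀ ≠ l.length - 1 := by omega
      have hleft : l.getD m₀ 0 < l.getD (m₀ - 1) 0 := by tauto
      have hright : l.getD m₀ 0 < l.getD (m₀ + 1) 0 := by tauto
      by_cases hwa : m₀ - 1 = A
      · have hwK : m₀ + 1 ∈ K := by
          rw [hK]
          refine Finset.mem_erase.mpr ⟨by omega, ?_⟩
          rw [Finset.mem_Icc]; omega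
        exact absurd (hmax _ hwK) (not_le.mpr hright)
      · have hwK : m₀ - 1 ∈ K := by
          rw [hK]
          refine Finset.mem_erase.mpr ⟨by omega, ?_⟩
          rw [Finset.mem_Icc]; omega
        exact absurd (hmax _ hwK) (not_le.mpr hleft)
  intro m hm1 hm2 hmA
  have hmK : m ∈ K := by
    rw [hK]
    refine Finset.mem_erase.mpr ⟨by omega, ?_⟩
    rw [Finset.mem_Icc]; omega
  exact lt_of_le_of_lt (hmax m hmK) key

-- chains
def DChain (l : List ℝ) (c : List ℕ) : Prop :=
  c ≠ [] ∧ (∀ x ∈ c, x < l.length) ∧ c.Chain' (dom l)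

lemma contractStep_nodup {l : List ℝ} (hnd : l.Nodup) : (contractStep l).Nodup := by
  rw [contractStep_eq]
  refine List.Nodup.map_on ?_ (surv_nodup l)
  intro x hx y hy hxy
  have hxn := (mem_surv.mp hx).1
  have hyn := (mem_surv.mp hy).1
  rw [List.getD_eq_getElem _ 0 hxn, List.getD_eq_getElem _ 0 hyn] at hxy
  exact (List.Nodup.getElem_inj_iff hnd).mp hxy

lemma rounds_le_of_chains (t : ℕ) : ∀ l : List ℝ, l.Nodup →
    (∀ c, DChain l c → c.length ≤ t) → contractStep^[t] l = [] := by
  induction t with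
  | zero =>
    intro l hnd hc
    simp only [Function.iterate_zero, id_eq]
    by_contra hne
    have h0 : 0 < l.length := List.length_pos_iff.mpr hne
    have := hc [0] ⟨by simp, by simpa using h0, List.isChain_singleton _⟩
    simp at this
  | succ t ih =>
    intro l hnd hc
    rw [Function.iterate_succ_apply]
    apply ih (contractStep l) (contractStep_nodup hnd)
    rintro c' ⟨hne', hmem', hch'⟩
    have hlen' : (contractStep l).length = (surv l).length := length_contractStep l
    set F : ℕ → ℕ := fun x => (surv l).getD x 0 with hF
    have hFmem : ∀ x ∈ c', F x < l.length := by
      intro x hx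
      have hx' : x < (surv l).length := hlen' ▸ hmem' x hx
      show (surv l).getD x 0 < l.length
      rw [List.getD_eq_getElem _ 0 hx']
      exact surv_lt_length hx'
    have hchm : (c'.map F).Chain' (dom l) := by
      unfold List.Chain' at hch' ⊢
      rw [List.isChain_map]
      exact hch'.imp (fun {a b} hab => dom_transfer hab)
    have hlastmem := List.getLast_mem hne'
    have hlast' : c'.getLast hne' < (surv l).length := hlen' ▸ hmem' _ hlastmem
    have hjsp : F (c'.getLast hne') = (surv l)[c'.getLast hne'] :=
      List.getD_eq_getElem _ 0 hlast'
    have hjl : F (c'.getLast hne') < l.length ∧ lminB l (F (c'.getLast hne')) = false := by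
      rw [hjsp]; exact mem_surv.mp (List.getElem_mem hlast')
    obtain ⟨b, hb⟩ := surv_dom hnd hjl.1 hjl.2
    have hchain : DChain l (c'.map F ++ [b]) := by
      refine ⟨by simp, ?_, ?_⟩
      · intro x hx
        rcases List.mem_append.mp hx with hx | hx
        · obtain ⟨y, hy, rfl⟩ := List.mem_map.mp hx
          exact hFmem y hy
        · simp at hx; subst hx; exact hb.2.1
      · unfold List.Chain'
        rw [List.isChain_append]
        refine ⟨hchm, List.isChain_singleton _, ?_⟩
        intro x hx y hy
        simp only [List.head?_cons, Option.mem_some_iff] at hy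
        subst hy
        rw [List.getLast?_map, List.getLast?_eq_getLast hne'] at hx
        simp only [Option.map_some, Option.mem_some_iff] at hx
        subst hx
        exact hb
    have := hc _ hchain
    simp only [List.length_append, List.length_map, List.length_cons, List.length_nil] at this
    omega

lemma contractRounds_le {l : List ℝ} (hnd : l.Nodup) {t : ℕ}
    (hc : ∀ c, DChain l c → c.length ≤ t) : contractRounds l ≤ t :=
  Nat.sInf_le (rounds_le_of_chains t l hnd hc)

/-- from a long chain, extract many one-sided records at some position -/
lemma chain_records {l : List ℝ} {c : List ℕ} (hch : DChain l c) :
    ∃ i < l.length, ∃ SL SR : Finset ℕ,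
      c.length ≤ SL.card + SR.card + 1 ∧
      (∀ j ∈ SL, j < i ∧ dom l j i) ∧ (∀ j ∈ SR, i < j ∧ dom l j i) := by
  obtain ⟨hne, hmem, hch'⟩ := hch
  have hpw : c.Pairwise (dom l) := (List.isChain_iff_pairwise).mp hch'
  set i := c.getLast hne with hi
  have hin : i < l.length := hmem _ (List.getLast_mem hne)
  have hsplit : c.dropLast ++ [i] = c := List.dropLast_append_getLast hne
  have hpw2 : (c.dropLast ++ [i]).Pairwise (dom l) := by rw [hsplit]; exact hpw
  rw [List.pairwise_append] at hpw2
  have hdomi : ∀ x ∈ c.dropLast, dom l x i := by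
    intro x hx
    exact hpw2.2.2 x hx i (by simp)
  have hndc : c.dropLast.Nodup :=
    (List.dropLast_sublist c).nodup (hpw.imp (fun h => h.2.2.1))
  refine ⟨i, hin, (c.dropLast.toFinset).filter (· < i),
    (c.dropLast.toFinset).filter (i < ·), ?_, ?_, ?_⟩
  · have hcard : c.dropLast.toFinset.card = c.length - 1 := by
      rw [List.toFinset_card_of_nodup hndc, List.length_dropLast]
    have hsub : c.dropLast.toFinset ⊆
        ((c.dropLast.toFinset).filter (· < i)) ∪ ((c.dropLast.toFinset).filter (i < ·)) := by
      intro x hx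
      have hxi : x ≠ i := (hdomi x (List.mem_toFinset.mp hx)).2.2.1
      rcases Nat.lt_or_ge x i with h | h
      · exact Finset.mem_union_left _ (Finset.mem_filter.mpr ⟨hx, h⟩)
      · exact Finset.mem_union_right _ (Finset.mem_filter.mpr ⟨hx, by omega⟩)
    have := le_trans (Finset.card_le_card hsub) (Finset.card_union_le _ _)
    have hlen1 : 1 ≤ c.length := List.length_pos_iff.mpr hne
    omega
  · intro j hj
    rw [Finset.mem_filter] at hj
    exact ⟨hj.2, hdomi j (List.mem_toFinset.mp hj.1)⟩
  · intro j hj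
    rw [Finset.mem_filter] at hj
    exact ⟨hj.2, hdomi j (List.mem_toFinset.mp hj.1)⟩

noncomputable def recEv (n : ℕ) (i : Fin n) (S : Finset (Fin n)) :
    Finset (Equiv.Perm (Fin n)) :=
  Finset.univ.filter
    (fun σ => ∀ j ∈ S, ∀ m : Fin n, j ≤ m → m ≤ i → m ≠ j → σ m < σ j)

lemma recEv_card_mul_le (n : ℕ) (i : Fin n) (S : Finset (Fin n)) :
    (∀ j ∈ S, j < i) →
    (recEv n i S).card * ∏ j ∈ S, ((i : ℕ) - (j : ℕ) + 1) ≤ Nat.factorial n := by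
  induction S using Finset.induction_on_max with
  | empty =>
    intro _
    have h1 : recEv n i ∅ = Finset.univ := by
      apply Finset.filter_true_of_mem; intro σ _; simp
    rw [h1, Finset.prod_empty, mul_one, Finset.card_univ, Fintype.card_perm, Fintype.card_fin]
  | insert a S hmax ih =>
    intro hS
    have hai : a < i := hS a (Finset.mem_insert_self a S)
    have haS : a ∉ S := fun h => lt_irrefl a (hmax a h)
    rw [Finset.prod_insert haS]
    -- key step : card (recEv (insert a S)) * (i - a + 1) ≤ card (recEv S)
    have key : (recEv n i (insert a S)).card * ((i : ℕ) - (a : ℕ) + 1) ≤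
        (recEv n i S).card := by
      have hcard : ((Finset.Icc a i).card) = (i : ℕ) - (a : ℕ) + 1 := by
        rw [Fin.card_Icc]; omega
      rw [← hcard, ← Finset.card_product]
      apply Finset.card_le_card_of_injOn
        (fun x => x.1 * Equiv.swap a x.2)
      · rintro ⟨σ, c⟩ hx
        rw [Finset.mem_coe, Finset.mem_product] at hx
        obtain ⟨hσ, hc⟩ := hx
        rw [Finset.mem_Icc] at hc
        rw [Finset.mem_coe]
        rw [recEv, Finset.mem_filter] at hσ ⊢
        refine ⟨Finset.mem_univ _, ?_⟩
        intro j hj m hm1 hm2 hmj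
        have hja : j < a := hmax j hj
        have hjfix : Equiv.swap a c j = j :=
          Equiv.swap_apply_of_ne_of_ne (ne_of_lt hja) (ne_of_lt (lt_of_lt_of_le hja hc.1))
        have hm' : Equiv.swap a c m = m ∨ Equiv.swap a c m = a ∨ Equiv.swap a c m = c := by
          rcases eq_or_ne m a with h1 | h1
          · rw [h1]; right; right; exact Equiv.swap_apply_left a c
          rcases eq_or_ne m c with h2 | h2
          · rw [h2]; right; left; exact Equiv.swap_apply_right a c
          · left; exact Equiv.swap_apply_of_ne_of_ne h1 h2
        have hb1 : j ≤ Equiv.swap a c m := by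
          rcases hm' with h | h | h <;> rw [h]
          · exact hm1
          · exact hja.le
          · exact le_trans hja.le hc.1
        have hb2 : Equiv.swap a c m ≤ i := by
          rcases hm' with h | h | h <;> rw [h]
          · exact hm2
          · exact hai.le
          · exact hc.2
        have hb3 : Equiv.swap a c m ≠ j := by
          intro h
          exact hmj ((Equiv.swap a c).injective (h.trans hjfix.symm))
        have := hσ.2 j (Finset.mem_insert_of_mem hj) (Equiv.swap a c m) hb1 hb2 hb3
        simpa [Equiv.Perm.mul_apply, hjfix] using this
      · -- injectivity
        have argmax : ∀ σ : Equiv.Perm (Fin n), ∀ c : Fin n,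
            σ ∈ recEv n i (insert a S) → c ∈ Finset.Icc a i →
            ∀ m ∈ Finset.Icc a i, m ≠ c → (σ * Equiv.swap a c) m < σ a := by
          intro σ c hσ hc m hm hmc
          rw [Finset.mem_Icc] at hm hc
          rw [recEv, Finset.mem_filter] at hσ
          have hm'ne : Equiv.swap a c m ≠ a := by
            intro h
            exact hmc ((Equiv.swap a c).injective (h.trans (Equiv.swap_apply_right a c).symm))
          have hm' : Equiv.swap a c m = m ∨ Equiv.swap a c m = c := by
            rcases eq_or_ne m a with h1 | h1
            · rw [h1]; right; exact Equiv.swap_apply_left a c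
            rcases eq_or_ne m c with h2 | h2
            · exact absurd h2 hmc
            · left; exact Equiv.swap_apply_of_ne_of_ne h1 h2
          have hb1 : a ≤ Equiv.swap a c m := by
            rcases hm' with h | h <;> rw [h]
            · exact hm.1
            · exact hc.1
          have hb2 : Equiv.swap a c m ≤ i := by
            rcases hm' with h | h <;> rw [h]
            · exact hm.2
            · exact hc.2
          have := hσ.2 a (Finset.mem_insert_self a S) (Equiv.swap a c m) hb1 hb2 hm'ne
          simpa [Equiv.Perm.mul_apply] using this
        rintro ⟨σ₁, c₁⟩ h1 ⟨σ₂, c₂⟩ h2 heq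
        replace heq : σ₁ * Equiv.swap a c₁ = σ₂ * Equiv.swap a c₂ := heq
        simp only [Finset.coe_product, Set.mem_prod, Finset.mem_coe] at h1 h2
        obtain ⟨hσ₁, hc₁⟩ := h1
        obtain ⟨hσ₂, hc₂⟩ := h2
        have htop1 : (σ₁ * Equiv.swap a c₁) c₁ = σ₁ a := by
          simp [Equiv.Perm.mul_apply]
        have htop2 : (σ₂ * Equiv.swap a c₂) c₂ = σ₂ a := by
          simp [Equiv.Perm.mul_apply]
        have hcc : c₁ = c₂ := by
          by_contra hne
          have ha1 := argmax σ₁ c₁ hσ₁ hc₁ c₂ hc₂ (Ne.symm hne)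
          have ha2 := argmax σ₂ c₂ hσ₂ hc₂ c₁ hc₁ hne
          rw [heq, htop2] at ha1
          rw [← heq, htop1] at ha2
          exact absurd ha1 (not_lt.mpr ha2.le)
        subst hcc
        have : σ₁ = σ₂ := mul_right_cancel heq
        simp [this]
    calc (recEv n i (insert a S)).card * (((i : ℕ) - (a : ℕ) + 1) * ∏ j ∈ S, ((i : ℕ) - (j : ℕ) + 1))
        = ((recEv n i (insert a S)).card * ((i : ℕ) - (a : ℕ) + 1)) * ∏ j ∈ S, ((i : ℕ) - (j : ℕ) + 1) := by ring
      _ ≤ (recEv n i S).card * ∏ j ∈ S, ((i : ℕ) - (j : ℕ) + 1) :=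
          Nat.mul_le_mul_right _ key
      _ ≤ Nat.factorial n := ih (fun j hj => hS j (Finset.mem_insert_of_mem hj))

lemma esymm_bound {β : Type*} (T : Finset β) (f : β → ℝ) (hf : ∀ j, 0 ≤ f j) :
    ∀ a : ℕ, (a.factorial : ℝ) * ∑ S ∈ Finset.powersetCard a T, ∏ j ∈ S, f j ≤
      (∑ j ∈ T, f j) ^ a := by
  intro a
  induction a with
  | zero => simp
  | succ a ih =>
    have hT0 : 0 ≤ ∑ j ∈ T, f j := Finset.sum_nonneg fun j _ => hf j
    have key : ∑ S ∈ Finset.powersetCard (a+1) T, ((a:ℝ)+1) * ∏ j ∈ S, f j ≤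
        (∑ j ∈ T, f j) * ∑ R ∈ Finset.powersetCard a T, ∏ j ∈ R, f j := by
      have lhs_eq : ∀ S ∈ Finset.powersetCard (a+1) T,
          ((a:ℝ)+1) * ∏ j ∈ S, f j = ∑ j ∈ S, f j * ∏ x ∈ S.erase j, f x := by
        intro S hS
        rw [Finset.mem_powersetCard] at hS
        have : ∀ j ∈ S, f j * ∏ x ∈ S.erase j, f x = ∏ x ∈ S, f x := by
          intro j hj
          exact Finset.mul_prod_erase S f hj
        rw [Finset.sum_congr rfl this, Finset.sum_const, hS.2]
        push_cast
        ring
      rw [Finset.sum_congr rfl lhs_eq]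
      have reindex : ∑ S ∈ Finset.powersetCard (a+1) T, ∑ j ∈ S, f j * ∏ x ∈ S.erase j, f x =
          ∑ R ∈ Finset.powersetCard a T, ∑ j ∈ T \ R, f j * ∏ x ∈ R, f x := by
        rw [Finset.sum_sigma', Finset.sum_sigma']
        refine Finset.sum_nbij' (fun p => ⟨p.1.erase p.2, p.2⟩) (fun p => ⟨insert p.2 p.1, p.2⟩)
          ?_ ?_ ?_ ?_ ?_
        · rintro ⟨S, j⟩ hp
          simp only [Finset.mem_sigma, Finset.mem_powersetCard] at hp ⊢
          obtain ⟨⟨hsub, hcard⟩, hj⟩ := hp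
          refine ⟨⟨Finset.Subset.trans (Finset.erase_subset _ _) hsub, ?_⟩, ?_⟩
          · rw [Finset.card_erase_of_mem hj, hcard]
            omega
          · rw [Finset.mem_sdiff]
            exact ⟨hsub hj, Finset.notMem_erase _ _⟩
        · rintro ⟨R, j⟩ hp
          simp only [Finset.mem_sigma, Finset.mem_powersetCard, Finset.mem_sdiff] at hp ⊢
          obtain ⟨⟨hsub, hcard⟩, hjT, hjR⟩ := hp
          refine ⟨⟨?_, ?_⟩, Finset.mem_insert_self _ _⟩
          · intro x hx
            rcases Finset.mem_insert.mp hx with rfl | hx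
            · exact hjT
            · exact hsub hx
          · rw [Finset.card_insert_of_notMem hjR, hcard]
        · rintro ⟨S, j⟩ hp
          simp only [Finset.mem_sigma, Finset.mem_powersetCard] at hp
          have : insert j (S.erase j) = S := Finset.insert_erase hp.2
          simp [this]
        · rintro ⟨R, j⟩ hp
          simp only [Finset.mem_sigma, Finset.mem_powersetCard, Finset.mem_sdiff] at hp
          have : (insert j R).erase j = R := Finset.erase_insert hp.2.2
          simp [this]
        · rintro ⟨S, j⟩ hp
          simp only [Finset.mem_sigma, Finset.mem_powersetCard] at hp
          simp
      rw [reindex, Finset.mul_sum]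
      apply Finset.sum_le_sum
      intro R hR
      rw [← Finset.sum_mul]
      apply mul_le_mul_of_nonneg_right ?_ (Finset.prod_nonneg fun x _ => hf x)
      exact Finset.sum_le_sum_of_subset_of_nonneg (Finset.sdiff_subset) (fun j _ _ => hf j)
    calc ((a+1).factorial : ℝ) * ∑ S ∈ Finset.powersetCard (a+1) T, ∏ j ∈ S, f j
        = (a.factorial : ℝ) * ∑ S ∈ Finset.powersetCard (a+1) T, ((a:ℝ)+1) * ∏ j ∈ S, f j := by
          rw [Finset.mul_sum, Finset.mul_sum]
          rw [Nat.factorial_succ]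
          push_cast
          apply Finset.sum_congr rfl
          intro S _
          ring
      _ ≤ (a.factorial : ℝ) * ((∑ j ∈ T, f j) * ∑ R ∈ Finset.powersetCard a T, ∏ j ∈ R, f j) := by
          apply mul_le_mul_of_nonneg_left key (by positivity)
      _ = (∑ j ∈ T, f j) * ((a.factorial : ℝ) * ∑ R ∈ Finset.powersetCard a T, ∏ j ∈ R, f j) := by
          ring
      _ ≤ (∑ j ∈ T, f j) * (∑ j ∈ T, f j) ^ a := mul_le_mul_of_nonneg_left ih hT0
      _ = (∑ j ∈ T, f j) ^ (a+1) := by ring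

lemma harmonic_le_log : ∀ k : ℕ, ∑ d ∈ Finset.range k, (1 : ℝ) / (d + 2) ≤ Real.log (k + 1) := by
  intro k
  induction k with
  | zero => simp
  | succ k ih =>
    rw [Finset.sum_range_succ]
    have hstep : (1 : ℝ) / (k + 2) ≤ Real.log (k + 2) - Real.log (k + 1) := by
      have hpos1 : (0:ℝ) < k + 1 := by positivity
      have hpos2 : (0:ℝ) < k + 2 := by positivity
      have h := Real.log_le_sub_one_of_pos (x := (k+1)/(k+2)) (by positivity)
      rw [Real.log_div (by positivity) (by positivity)] at h
      have : (k+1)/(k+2) - 1 = -(1/(k+2) : ℝ) := by field_simp; norm_num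
      rw [this] at h
      linarith
    push_cast
    rw [show ((k:ℝ) + 1 + 1) = ((k:ℝ) + 2) by ring]
    linarith [ih]
noncomputable def badL (n a : ℕ) (i : Fin n) : Finset (Equiv.Perm (Fin n)) :=
  Finset.univ.filter (fun σ => ∃ S : Finset (Fin n), S.card = a ∧ (∀ j ∈ S, j < i) ∧
    ∀ j ∈ S, ∀ m : Fin n, j ≤ m → m ≤ i → m ≠ j → σ m < σ j)

noncomputable def badR (n a : ℕ) (i : Fin n) : Finset (Equiv.Perm (Fin n)) :=
  Finset.univ.filter (fun σ => ∃ S : Finset (Fin n), S.card = a ∧ (∀ j ∈ S, i < j) ∧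
    ∀ j ∈ S, ∀ m : Fin n, i ≤ m → m ≤ j → m ≠ j → σ m < σ j)

lemma sum_Iio_le_log (n : ℕ) (i : Fin n) :
    ∑ j ∈ Finset.Iio i, (1 : ℝ) / (((i : ℕ) - (j : ℕ) + 1 : ℕ) : ℝ) ≤ Real.log n := by
  have hreindex : ∑ j ∈ Finset.Iio i, (1 : ℝ) / (((i : ℕ) - (j : ℕ) + 1 : ℕ) : ℝ) =
      ∑ d ∈ Finset.range (i : ℕ), (1 : ℝ) / (d + 2) := by
    refine Finset.sum_nbij' (fun j => (i : ℕ) - (j : ℕ) - 1)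
      (fun d => ⟨(i : ℕ) - d - 1, by omega⟩) ?_ ?_ ?_ ?_ ?_
    · intro j hj
      rw [Finset.mem_Iio] at hj
      rw [Finset.mem_range]
      have : (j:ℕ) < (i:ℕ) := hj
      show (i:ℕ) - (j:ℕ) - 1 < (i:ℕ)
      omega
    · intro d hd
      rw [Finset.mem_range] at hd
      rw [Finset.mem_Iio]
      rw [Fin.lt_def]
      show (i:ℕ) - d - 1 < (i:ℕ)
      omega
    · intro j hj
      rw [Finset.mem_Iio] at hj
      have : (j:ℕ) < (i:ℕ) := hj
      apply Fin.ext
      show (i:ℕ) - ((i:ℕ) - (j:ℕ) - 1) - 1 = (j:ℕ)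
      omega
    · intro d hd
      rw [Finset.mem_range] at hd
      show (i:ℕ) - ((i:ℕ) - d - 1) - 1 = d
      omega
    · intro j hj
      rw [Finset.mem_Iio] at hj
      have hji : (j:ℕ) < (i:ℕ) := hj
      have h1 : ((i : ℕ) - (j : ℕ) + 1 : ℕ) = ((i:ℕ) - (j:ℕ) - 1) + 2 := by omega
      rw [h1]
      push_cast
      ring_nf
  rw [hreindex]
  calc ∑ d ∈ Finset.range (i : ℕ), (1 : ℝ) / (d + 2) ≤ Real.log ((i:ℕ) + 1) :=
        harmonic_le_log _
    _ ≤ Real.log n := by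
        apply Real.log_le_log (by positivity)
        have : (i:ℕ) + 1 ≤ n := i.isLt
        exact_mod_cast this

lemma badL_card_le (n a : ℕ) (i : Fin n) :
    ((badL n a i).card : ℝ) * (a.factorial : ℝ) ≤ (n.factorial : ℝ) * Real.log n ^ a := by
  have hlog0 : 0 ≤ Real.log n := by
    apply Real.log_nonneg
    have := i.pos
    exact_mod_cast this
  set f : Fin n → ℝ := fun j => (1 : ℝ) / (((i : ℕ) - (j : ℕ) + 1 : ℕ) : ℝ) with hf
  have hf0 : ∀ j, 0 ≤ f j := fun j => by positivity
  -- union bound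
  have hsub : badL n a i ⊆
      (Finset.powersetCard a (Finset.Iio i)).biUnion (fun S => recEv n i S) := by
    intro σ hσ
    rw [badL, Finset.mem_filter] at hσ
    obtain ⟨-, S, hcard, hlt, hrec⟩ := hσ
    rw [Finset.mem_biUnion]
    refine ⟨S, ?_, ?_⟩
    · rw [Finset.mem_powersetCard]
      exact ⟨fun j hj => Finset.mem_Iio.mpr (hlt j hj), hcard⟩
    · rw [recEv, Finset.mem_filter]
      exact ⟨Finset.mem_univ _, hrec⟩
  have h1 : ((badL n a i).card : ℝ) ≤
      ∑ S ∈ Finset.powersetCard a (Finset.Iio i), ((recEv n i S).card : ℝ) := by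
    have := le_trans (Finset.card_le_card hsub) (Finset.card_biUnion_le)
    exact_mod_cast this
  have h2 : ∀ S ∈ Finset.powersetCard a (Finset.Iio i),
      ((recEv n i S).card : ℝ) ≤ (n.factorial : ℝ) * ∏ j ∈ S, f j := by
    intro S hS
    rw [Finset.mem_powersetCard] at hS
    have hlt : ∀ j ∈ S, j < i := fun j hj => Finset.mem_Iio.mp (hS.1 hj)
    have hkey := recEv_card_mul_le n i S hlt
    have hprodpos : (0:ℝ) < ∏ j ∈ S, (((i : ℕ) - (j : ℕ) + 1 : ℕ) : ℝ) :=
      Finset.prod_pos fun j _ => by positivity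
    have hprodeq : ∏ j ∈ S, f j = 1 / ∏ j ∈ S, (((i : ℕ) - (j : ℕ) + 1 : ℕ) : ℝ) := by
      rw [hf]
      simp only [one_div]
      rw [← Finset.prod_inv_distrib]
    rw [hprodeq, mul_one_div, le_div_iff₀ hprodpos]
    exact_mod_cast hkey
  have h3 : ((badL n a i).card : ℝ) ≤ (n.factorial : ℝ) *
      ∑ S ∈ Finset.powersetCard a (Finset.Iio i), ∏ j ∈ S, f j := by
    rw [Finset.mul_sum]
    exact le_trans h1 (Finset.sum_le_sum h2)
  have h4 := esymm_bound (Finset.Iio i) f hf0 a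
  have h5 : (∑ j ∈ Finset.Iio i, f j) ^ a ≤ Real.log n ^ a :=
    pow_le_pow_left₀ (Finset.sum_nonneg fun j _ => hf0 j) (sum_Iio_le_log n i) a
  have hsum0 : 0 ≤ ∑ S ∈ Finset.powersetCard a (Finset.Iio i), ∏ j ∈ S, f j :=
    Finset.sum_nonneg fun S _ => Finset.prod_nonneg fun j _ => hf0 j
  calc ((badL n a i).card : ℝ) * (a.factorial : ℝ)
      ≤ ((n.factorial : ℝ) * ∑ S ∈ Finset.powersetCard a (Finset.Iio i), ∏ j ∈ S, f j) *
        (a.factorial : ℝ) := by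
        apply mul_le_mul_of_nonneg_right h3 (by positivity)
    _ = (n.factorial : ℝ) * ((a.factorial : ℝ) *
        ∑ S ∈ Finset.powersetCard a (Finset.Iio i), ∏ j ∈ S, f j) := by ring
    _ ≤ (n.factorial : ℝ) * Real.log n ^ a := by
        apply mul_le_mul_of_nonneg_left (le_trans h4 h5) (by positivity)
lemma badR_card_le_badL (n a : ℕ) (i : Fin n) :
    (badR n a i).card ≤ (badL n a i.rev).card := by
  apply Finset.card_le_card_of_injOn (fun σ => σ * (Fin.revPerm : Equiv.Perm (Fin n)))
  · intro σ hσ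
    rw [Finset.mem_coe, badR, Finset.mem_filter] at hσ
    obtain ⟨-, S, hcard, hgt, hrec⟩ := hσ
    rw [Finset.mem_coe, badL, Finset.mem_filter]
    refine ⟨Finset.mem_univ _, S.image Fin.rev, ?_, ?_, ?_⟩
    · rw [Finset.card_image_of_injective _ Fin.rev_injective, hcard]
    · intro j' hj'
      obtain ⟨j, hj, rfl⟩ := Finset.mem_image.mp hj'
      exact Fin.rev_lt_rev.mpr (hgt j hj)
    · intro j' hj' m' hm1 hm2 hm3
      obtain ⟨j, hj, rfl⟩ := Finset.mem_image.mp hj'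
      have e1 : (σ * (Fin.revPerm : Equiv.Perm (Fin n))) m' = σ m'.rev := by
        rw [Equiv.Perm.mul_apply, Fin.revPerm_apply]
      have e2 : (σ * (Fin.revPerm : Equiv.Perm (Fin n))) j.rev = σ j := by
        rw [Equiv.Perm.mul_apply, Fin.revPerm_apply, Fin.rev_rev]
      rw [e1, e2]
      apply hrec j hj m'.rev
      · exact Fin.rev_le_rev.mp (show m'.rev.rev ≤ i.rev by rwa [Fin.rev_rev])
      · exact Fin.rev_le_rev.mp (show j.rev ≤ m'.rev.rev by rwa [Fin.rev_rev])
      · intro h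
        apply hm3
        rw [← Fin.rev_rev (i := m'), h]
  · intro σ₁ _ σ₂ _ h
    have h' : σ₁ * (Fin.revPerm : Equiv.Perm (Fin n)) = σ₂ * Fin.revPerm := h
    exact mul_right_cancel h'

lemma bridge (n a : ℕ) (σ : Equiv.Perm (Fin n))
    (h : ¬ contractRounds (List.ofFn fun i : Fin n => ((σ i : ℕ) : ℝ)) ≤ 2*a+1) :
    ∃ i : Fin n, σ ∈ badL n a i ∨ σ ∈ badR n a i := by
  set l := List.ofFn fun i : Fin n => ((σ i : ℕ) : ℝ) with hl
  have hlen : l.length = n := by rw [hl, List.length_ofFn]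
  have hget : ∀ m : ℕ, ∀ hm : m < n, l.getD m 0 = ((σ ⟨m, hm⟩ : ℕ) : ℝ) := by
    intro m hm
    rw [hl, List.getD_eq_getElem _ 0 (by rw [List.length_ofFn]; exact hm)]
    simp [List.getElem_ofFn]
  have hnd : l.Nodup := by
    rw [hl, List.nodup_ofFn]
    intro x y hxy
    simp only at hxy
    have hxy' : (σ x : ℕ) = (σ y : ℕ) := by exact_mod_cast hxy
    exact σ.injective (Fin.ext hxy')
  have hchain : ∃ c, DChain l c ∧ 2*a+2 ≤ c.length := by
    by_contra hc
    push_neg at hc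
    exact h (contractRounds_le hnd (fun c hcc => by have := hc c hcc; omega))
  obtain ⟨c, hcc, hclen⟩ := hchain
  obtain ⟨i, hin, SL, SR, hcard, hSL, hSR⟩ := chain_records hcc
  rw [hlen] at hin
  have hside : a ≤ SL.card ∨ a ≤ SR.card := by omega
  rcases hside with hside | hside
  · obtain ⟨S₀, hS₀sub, hS₀card⟩ := Finset.exists_subset_card_eq hside
    have hmem : ∀ m ∈ S₀, m < n := by
      intro m hm
      have := (hSL m (hS₀sub hm)).2.1
      omega
    refine ⟨⟨i, hin⟩, Or.inl ?_⟩
    rw [badL, Finset.mem_filter]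
    refine ⟨Finset.mem_univ _, S₀.attachFin hmem, ?_, ?_, ?_⟩
    · rw [Finset.card_attachFin, hS₀card]
    · intro j' hj'
      rw [Finset.mem_attachFin] at hj'
      exact (hSL _ (hS₀sub hj')).1
    · intro j' hj' m' hm1 hm2 hm3
      rw [Finset.mem_attachFin] at hj'
      obtain ⟨hji, hdom⟩ := hSL _ (hS₀sub hj')
      have hm1' : (j' : ℕ) ≤ (m' : ℕ) := hm1
      have hm2' : (m' : ℕ) ≤ i := hm2
      have hm3' : (m' : ℕ) ≠ (j' : ℕ) := fun hx => hm3 (Fin.ext hx)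
      have hcond := hdom.2.2.2 (m' : ℕ) (le_trans (min_le_left _ _) hm1')
        (le_trans hm2' (le_max_right _ _)) hm3'
      rw [hget _ (by omega : (m':ℕ) < n), hget _ (by omega : (j':ℕ) < n)] at hcond
      simp only [Fin.eta] at hcond
      have : (σ m' : ℕ) < (σ j' : ℕ) := by exact_mod_cast hcond
      exact this
  · obtain ⟨S₀, hS₀sub, hS₀card⟩ := Finset.exists_subset_card_eq hside
    have hmem : ∀ m ∈ S₀, m < n := by
      intro m hm
      have := (hSR m (hS₀sub hm)).2.1
      omega
    refine ⟨⟨i, hin⟩, Or.inr ?_⟩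
    rw [badR, Finset.mem_filter]
    refine ⟨Finset.mem_univ _, S₀.attachFin hmem, ?_, ?_, ?_⟩
    · rw [Finset.card_attachFin, hS₀card]
    · intro j' hj'
      rw [Finset.mem_attachFin] at hj'
      exact (hSR _ (hS₀sub hj')).1
    · intro j' hj' m' hm1 hm2 hm3
      rw [Finset.mem_attachFin] at hj'
      obtain ⟨hji, hdom⟩ := hSR _ (hS₀sub hj')
      have hm1' : (i : ℕ) ≤ (m' : ℕ) := hm1
      have hm2' : (m' : ℕ) ≤ (j' : ℕ) := hm2
      have hm3' : (m' : ℕ) ≠ (j' : ℕ) := fun hx => hm3 (Fin.ext hx)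
      have hcond := hdom.2.2.2 (m' : ℕ) (le_trans (min_le_right _ _) hm1')
        (le_trans hm2' (le_max_left _ _)) hm3'
      rw [hget _ (by omega : (m':ℕ) < n), hget _ (by omega : (j':ℕ) < n)] at hcond
      simp only [Fin.eta] at hcond
      have : (σ m' : ℕ) < (σ j' : ℕ) := by exact_mod_cast hcond
      exact this


lemma pow_self_le_factorial_mul_exp : ∀ a : ℕ, (a:ℝ)^a ≤ (a.factorial : ℝ) * Real.exp 1 ^ a := by
  intro a
  induction a with
  | zero => simp
  | succ a ih =>
    rcases Nat.eq_zero_or_pos a with rfl | hpos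
    · norm_num
    have ha0 : (0:ℝ) < a := by exact_mod_cast hpos
    have hstep : ((a:ℝ)+1)^a ≤ (a:ℝ)^a * Real.exp 1 := by
      have h1 : (a:ℝ) + 1 ≤ a * Real.exp (1/a) := by
        have := Real.add_one_le_exp (1/(a:ℝ))
        calc (a:ℝ) + 1 = a * (1/a + 1) := by field_simp; ring
          _ ≤ a * Real.exp (1/a) := by
              apply mul_le_mul_of_nonneg_left this ha0.le
      calc ((a:ℝ)+1)^a ≤ ((a:ℝ) * Real.exp (1/a))^a := by
            apply pow_le_pow_left₀ (by positivity) h1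
        _ = (a:ℝ)^a * Real.exp (1/a) ^ a := mul_pow _ _ _
        _ = (a:ℝ)^a * Real.exp 1 := by
            rw [← Real.exp_nat_mul]
            congr 1
            field_simp
    push_cast
    calc ((a:ℝ)+1)^(a+1) = ((a:ℝ)+1) * ((a:ℝ)+1)^a := by ring
      _ ≤ ((a:ℝ)+1) * ((a:ℝ)^a * Real.exp 1) := by
          apply mul_le_mul_of_nonneg_left hstep (by positivity)
      _ ≤ ((a:ℝ)+1) * (((a.factorial : ℝ) * Real.exp 1 ^ a) * Real.exp 1) := by
          apply mul_le_mul_of_nonneg_left (mul_le_mul_of_nonneg_right ih (Real.exp_pos 1).le)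
            (by positivity)
      _ = ((a+1).factorial : ℝ) * Real.exp 1 ^ (a+1) := by
          rw [Nat.factorial_succ]
          push_cast
          ring

set_option maxHeartbeats 1000000 in
/-- Under a uniformly random assignment of distinct priorities to a list of `n`
elements, the number of rounds of parallel list contraction is `O(log n)` with
high probability: there is a constant `C` such that for every `c ≥ 1` and `n ≥ 2`,
with probability at least `1 - n^(-c)` over the random permutation of priorities,
the number of rounds is at most `C·c·log n`. -/
theorem list_contraction_rounds_whp :
    ∃ C : ℝ, 0 < C ∧ ∀ (c : ℝ), 1 ≤ c → ∀ n : ℕ, 2 ≤ n →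
      (1 - (n : ℝ) ^ (-c)) * (Fintype.card (Equiv.Perm (Fin n))) ≤
        ((Finset.univ : Finset (Equiv.Perm (Fin n))).filter
          (fun σ => (contractRounds (List.ofFn fun i : Fin n => ((σ i : ℕ) : ℝ)) : ℝ)
            ≤ C * c * Real.log n)).card := by
  refine ⟨40, by norm_num, ?_⟩
  intro c hc n hn
  have hn1 : (1:ℝ) < (n:ℝ) := by exact_mod_cast lt_of_lt_of_le one_lt_two hn
  have hn0 : (0:ℝ) < (n:ℝ) := by linarith
  set L := Real.log n with hL
  have hLpos : 0 < L := Real.log_pos hn1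
  have hlog2 : Real.log 2 ≤ L := Real.log_le_log (by norm_num) (by exact_mod_cast hn)
  have hcL : (0.69:ℝ) ≤ c * L := by
    have h1 : Real.log 2 ≤ c * L := by nlinarith
    nlinarith [Real.log_two_gt_d9]
  set a := ⌈9 * c * L⌉₊ with ha
  have haLb : 9 * c * L ≤ (a:ℝ) := Nat.le_ceil _
  have haUb : (a:ℝ) < 9 * c * L + 1 := Nat.ceil_lt_add_one (by positivity)
  have ha_pos : (0:ℝ) < (a:ℝ) := lt_of_lt_of_le (by positivity) haLb
  have hfa : (0:ℝ) < (a.factorial : ℝ) := by exact_mod_cast a.factorial_pos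
  set P : Equiv.Perm (Fin n) → Prop := fun σ =>
    ((contractRounds (List.ofFn fun i : Fin n => ((σ i : ℕ) : ℝ)) : ℝ) ≤ 40 * c * L) with hP
  have hN : ((Fintype.card (Equiv.Perm (Fin n))) : ℝ) = (n.factorial : ℝ) := by
    rw [Fintype.card_perm, Fintype.card_fin]
  -- inclusion of the bad event in the union
  have hsub : (Finset.univ.filter (fun σ => ¬ P σ)) ⊆
      Finset.univ.biUnion (fun i : Fin n => badL n a i ∪ badR n a i) := by
    intro σ hσ
    rw [Finset.mem_filter] at hσ
    have hbad : ¬ contractRounds (List.ofFn fun i : Fin n => ((σ i : ℕ) : ℝ)) ≤ 2*a+1 := by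
      intro hle
      apply hσ.2
      rw [hP]
      have h1 : ((contractRounds (List.ofFn fun i : Fin n => ((σ i : ℕ) : ℝ)) : ℕ) : ℝ) ≤
          (2*a+1 : ℕ) := by exact_mod_cast hle
      have h2 : ((2*a+1 : ℕ) : ℝ) ≤ 40 * c * L := by
        push_cast
        nlinarith
      exact le_trans h1 h2
    obtain ⟨i, hi⟩ := bridge n a σ hbad
    rw [Finset.mem_biUnion]
    exact ⟨i, Finset.mem_univ _, Finset.mem_union.mpr hi⟩
  -- counting
  have hbadL : ∀ i : Fin n, ((badL n a i).card : ℝ) ≤ (n.factorial : ℝ) * L ^ a / a.factorial := by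
    intro i
    rw [le_div_iff₀ hfa]
    exact badL_card_le n a i
  have hbadcard : (((Finset.univ.filter (fun σ => ¬ P σ)).card) : ℝ) ≤
      2 * (n:ℝ) * ((n.factorial : ℝ) * L ^ a / a.factorial) := by
    have h1 : ((Finset.univ.filter (fun σ => ¬ P σ)).card) ≤
        ∑ i : Fin n, ((badL n a i).card + (badL n a i.rev).card) := by
      calc ((Finset.univ.filter (fun σ => ¬ P σ)).card)
          ≤ (Finset.univ.biUnion (fun i : Fin n => badL n a i ∪ badR n a i)).card :=
            Finset.card_le_card hsub
        _ ≤ ∑ i : Fin n, (badL n a i ∪ badR n a i).card := Finset.card_biUnion_le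
        _ ≤ ∑ i : Fin n, ((badL n a i).card + (badL n a i.rev).card) := by
            apply Finset.sum_le_sum
            intro i _
            exact le_trans (Finset.card_union_le _ _)
              (Nat.add_le_add_left (badR_card_le_badL n a i) _)
    have h2 : (((Finset.univ.filter (fun σ => ¬ P σ)).card) : ℝ) ≤
        ∑ i : Fin n, (((badL n a i).card : ℝ) + ((badL n a i.rev).card : ℝ)) := by
      exact_mod_cast h1
    calc (((Finset.univ.filter (fun σ => ¬ P σ)).card) : ℝ)
        ≤ ∑ i : Fin n, (((badL n a i).card : ℝ) + ((badL n a i.rev).card : ℝ)) := h2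
      _ ≤ ∑ _i : Fin n, ((n.factorial : ℝ) * L ^ a / a.factorial +
            (n.factorial : ℝ) * L ^ a / a.factorial) := by
          apply Finset.sum_le_sum
          intro i _
          exact add_le_add (hbadL i) (hbadL i.rev)
      _ = 2 * (n:ℝ) * ((n.factorial : ℝ) * L ^ a / a.factorial) := by
          rw [Finset.sum_const, Finset.card_univ, Fintype.card_fin]
          ring
  -- analytic bound
  have he0 : (0:ℝ) < Real.exp 1 := Real.exp_pos 1
  have he3 : Real.exp 1 < 3 := lt_trans Real.exp_one_lt_d9 (by norm_num)
  have main : 2 * (n:ℝ) * L ^ a ≤ (n:ℝ)^(-c) * a.factorial := by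
    have hLa : L ≤ (a:ℝ) / Real.exp 1 ^ 2 := by
      rw [le_div_iff₀ (by positivity)]
      have h9 : Real.exp 1 ^ 2 ≤ 9 := by nlinarith
      have h91 : L * Real.exp 1 ^ 2 ≤ 9 * L := by nlinarith
      have h92 : 9 * L ≤ 9 * c * L := by nlinarith
      linarith
    have h1 : L ^ a ≤ ((a:ℝ) / Real.exp 1 ^ 2) ^ a := pow_le_pow_left₀ hLpos.le hLa a
    have hfacge : (a:ℝ)^a / Real.exp 1 ^ a ≤ (a.factorial : ℝ) := by
      rw [div_le_iff₀ (by positivity)]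
      exact pow_self_le_factorial_mul_exp a
    have hexp : 2 * (n:ℝ) / Real.exp 1 ^ a ≤ (n:ℝ)^(-c) := by
      have hea : (n:ℝ)^((9:ℝ)*c) ≤ Real.exp 1 ^ a := by
        rw [Real.exp_one_pow, Real.rpow_def_of_pos hn0]
        apply Real.exp_le_exp.mpr
        calc Real.log n * (9*c) = 9 * c * L := by rw [hL]; ring
          _ ≤ (a:ℝ) := haLb
      have h2n : 2 * (n:ℝ) ≤ (n:ℝ)^((8:ℝ)*c) := by
        have hb : (n:ℝ)^((2:ℝ)) ≤ (n:ℝ)^((8:ℝ)*c) :=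
          Real.rpow_le_rpow_of_exponent_le hn1.le (by linarith)
        have hb2 : (n:ℝ)^((2:ℝ)) = (n:ℝ) * (n:ℝ) := by
          rw [show ((2:ℝ)) = ((2:ℕ):ℝ) by norm_num, Real.rpow_natCast]
          ring
        have hnn : (2:ℝ) ≤ (n:ℝ) := by exact_mod_cast hn
        have hn2 : 2 * (n:ℝ) ≤ (n:ℝ) * (n:ℝ) := by nlinarith
        rw [hb2] at hb
        linarith
      rw [div_le_iff₀ (by positivity)]
      calc 2 * (n:ℝ) ≤ (n:ℝ)^((8:ℝ)*c) := h2n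
        _ = (n:ℝ)^(-c) * (n:ℝ)^((9:ℝ)*c) := by
            rw [← Real.rpow_add hn0]
            congr 1
            ring
        _ ≤ (n:ℝ)^(-c) * Real.exp 1 ^ a := by
            apply mul_le_mul_of_nonneg_left hea (by positivity)
    calc 2 * (n:ℝ) * L ^ a ≤ 2 * (n:ℝ) * ((a:ℝ) / Real.exp 1 ^ 2) ^ a := by
          apply mul_le_mul_of_nonneg_left h1 (by positivity)
      _ = ((a:ℝ)^a / Real.exp 1 ^ a) * (2 * (n:ℝ) / Real.exp 1 ^ a) := by
          rw [div_pow, pow_right_comm]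
          field_simp
      _ ≤ (a.factorial : ℝ) * (n:ℝ)^(-c) := by
          apply mul_le_mul hfacge hexp (by positivity) hfa.le
      _ = (n:ℝ)^(-c) * a.factorial := by ring
  have hkey : 2 * (n:ℝ) * ((n.factorial : ℝ) * L ^ a / a.factorial) ≤
      (n:ℝ)^(-c) * (n.factorial : ℝ) := by
    have hFnn : (0:ℝ) ≤ (n.factorial : ℝ) := by positivity
    rw [show 2 * (n:ℝ) * ((n.factorial : ℝ) * L ^ a / a.factorial) =
        (n.factorial : ℝ) * (2 * (n:ℝ) * L ^ a) / a.factorial by ring]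
    rw [div_le_iff₀ hfa]
    calc (n.factorial : ℝ) * (2 * (n:ℝ) * L ^ a) ≤
        (n.factorial : ℝ) * ((n:ℝ)^(-c) * a.factorial) :=
          mul_le_mul_of_nonneg_left main hFnn
      _ = (n:ℝ)^(-c) * (n.factorial : ℝ) * a.factorial := by ring
  -- conclusion
  have hcards : (Finset.univ.filter P).card + (Finset.univ.filter (fun σ => ¬ P σ)).card =
      n.factorial := by
    rw [Finset.card_filter_add_card_filter_not, Finset.card_univ,
      Fintype.card_perm, Fintype.card_fin]
  have hgood : ((Finset.univ.filter P).card : ℝ) =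
      (n.factorial : ℝ) - ((Finset.univ.filter (fun σ => ¬ P σ)).card : ℝ) := by
    have := hcards
    push_cast [← this]
    ring
  show (1 - (n : ℝ) ^ (-c)) * (Fintype.card (Equiv.Perm (Fin n))) ≤
      ((Finset.univ.filter P).card : ℝ)
  rw [hN, hgood]
  have hbound : ((Finset.univ.filter (fun σ => ¬ P σ)).card : ℝ) ≤
      (n:ℝ)^(-c) * (n.factorial : ℝ) := le_trans hbadcard hkey
  nlinarith [hbound]
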